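/- Let D be a finite nonempty set of triangles of the Farey graph F such that the subgraph of the dual graph T induced on D is connected. Then the union of the vertices of the triangles in D, i.e. ⋃_{Δ ∈ D} Δ ⊆ ℙ¹(ℚ), is rigid: every locally injective simplicial map from this set into ℙ¹(ℚ) coincides with the action of some element of GL(2,ℤ). (This is the paper's claim that every subcomplex of the Farey complex homeomorphic to a disk is rigid, used in the proof of the main theorem for S₀,₄ and S₁,₁.) -/

import Mathlib

/-- The projective line over `ℚ`. -/
abbrev P1Q := Projectivization ℚ (Fin 2 → ℚ)

/-- The point of `ℙ¹(ℚ)` with homogeneous integer coordinates `[a : b]`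
(a junk value is returned when `a = b = 0`, which never occurs for primitive vectors). -/
def fareyMk (a b : ℤ) : P1Q :=
  if h : a = 0 ∧ b = 0 then
    Projectivization.mk ℚ ![1, 0] (by
      intro hv
      have h0 := congrFun hv 0
      simp at h0)
  else
    Projectivization.mk ℚ ![(a : ℚ), (b : ℚ)] (by
      intro hv
      have h0 : (a : ℚ) = 0 := by simpa using congrFun hv 0
      have h1 : (b : ℚ) = 0 := by simpa using congrFun hv 1
      exact h ⟨by exact_mod_cast h0, by exact_mod_cast h1⟩)

/-- Two points of `ℙ¹(ℚ)` are related if they are represented by primitive integer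
vectors `(a,b)` and `(c,d)` with `|ad - bc| = 1`. -/
def fareyRel (x y : P1Q) : Prop :=
  ∃ a b c d : ℤ, Int.gcd a b = 1 ∧ Int.gcd c d = 1 ∧ |a * d - b * c| = 1 ∧
    x = fareyMk a b ∧ y = fareyMk c d

/-- The Farey graph on `ℙ¹(ℚ)`. -/
def fareyGraph : SimpleGraph P1Q := SimpleGraph.fromRel fareyRel

/-- The rational matrix associated to an element of `GL(2,ℤ)`. -/
def matQ (g : GL (Fin 2) ℤ) : Matrix (Fin 2) (Fin 2) ℚ :=
  (g : Matrix (Fin 2) (Fin 2) ℤ).map ((↑) : ℤ → ℚ)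

lemma matQ_mul (g h : GL (Fin 2) ℤ) : matQ (g * h) = matQ g * matQ h := by
  simpa [matQ] using
    (RingHom.mapMatrix (Int.castRingHom ℚ)).map_mul (g : Matrix (Fin 2) (Fin 2) ℤ) h

lemma matQ_one : matQ 1 = (1 : Matrix (Fin 2) (Fin 2) ℚ) := by
  simpa [matQ] using (RingHom.mapMatrix (Int.castRingHom ℚ)).map_one

lemma mulVecLin_matQ_injective (g : GL (Fin 2) ℤ) :
    Function.Injective ((matQ g).mulVecLin) := by
  have key : ∀ v : Fin 2 → ℚ, (matQ g⁻¹).mulVecLin ((matQ g).mulVecLin v) = v := by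
    intro v
    rw [Matrix.mulVecLin_apply, Matrix.mulVecLin_apply, Matrix.mulVec_mulVec,
      ← matQ_mul, inv_mul_cancel, matQ_one, Matrix.one_mulVec]
  exact Function.LeftInverse.injective key

/-- The action of `GL(2,ℤ)` on `ℙ¹(ℚ)` by linear action on representative vectors. -/
def fareyAct (g : GL (Fin 2) ℤ) (x : P1Q) : P1Q :=
  Projectivization.map ((matQ g).mulVecLin) (mulVecLin_matQ_injective g) x

/-- A map `φ` is simplicial on `Y ⊆ ℙ¹(ℚ)` with respect to the Farey graph. -/
def FareySimplicial (Y : Set P1Q) (φ : P1Q → P1Q) : Prop :=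
  ∀ y ∈ Y, ∀ z ∈ Y, fareyGraph.Adj y z → fareyGraph.Adj (φ y) (φ z)

/-- The closed star of `y` in `Y`: the set `{y} ∪ {z ∈ Y : z adjacent to y}`. -/
def fareyClosedStar (Y : Set P1Q) (y : P1Q) : Set P1Q :=
  {z ∈ Y | z = y ∨ fareyGraph.Adj y z}

/-- A map `φ` is locally injective on `Y ⊆ ℙ¹(ℚ)` with respect to the Farey graph. -/
def FareyLocallyInjective (Y : Set P1Q) (φ : P1Q → P1Q) : Prop :=
  ∀ y ∈ Y, Set.InjOn φ (fareyClosedStar Y y)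

/-- A triangle of the Farey graph: a set of three pairwise adjacent vertices. -/
def IsFareyTriangle (t : Set P1Q) : Prop :=
  t.ncard = 3 ∧ ∀ x ∈ t, ∀ y ∈ t, x ≠ y → fareyGraph.Adj x y

/-- The dual graph of the Farey graph: vertices are the triangles of the Farey graph,
two triangles being adjacent iff their intersection has exactly two elements. -/
def fareyDual : SimpleGraph {t : Set P1Q // IsFareyTriangle t} :=
  SimpleGraph.fromRel (fun t₁ t₂ => ((t₁ : Set P1Q) ∩ (t₂ : Set P1Q)).ncard = 2)

open Projectivization in
lemma fareyMk_def (a b : ℤ) (h : ¬(a = 0 ∧ b = 0)) (hv : ¬ (![(a:ℚ), b] = 0)) :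
    fareyMk a b = Projectivization.mk ℚ ![(a:ℚ), b] hv := by
  rw [fareyMk, dif_neg h]

lemma vec_ne_zero {a b : ℤ} (h : ¬(a = 0 ∧ b = 0)) : ![(a:ℚ), b] ≠ 0 := by
  intro hv
  have h0 : (a : ℚ) = 0 := by simpa using congrFun hv 0
  have h1 : (b : ℚ) = 0 := by simpa using congrFun hv 1
  exact h ⟨by exact_mod_cast h0, by exact_mod_cast h1⟩

lemma gcd_ne_zero {a b : ℤ} (h : Int.gcd a b = 1) : ¬(a = 0 ∧ b = 0) := by
  rintro ⟨rfl, rfl⟩; simp at h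

/-- scalar multiple -/
lemma fareyMk_smul {a b : ℤ} (k : ℤ) (hk : k ≠ 0) (h : ¬(a = 0 ∧ b = 0)) :
    fareyMk (k * a) (k * b) = fareyMk a b := by
  have h' : ¬(k * a = 0 ∧ k * b = 0) := by
    rintro ⟨h1, h2⟩
    exact h ⟨(mul_eq_zero.1 h1).resolve_left hk, (mul_eq_zero.1 h2).resolve_left hk⟩
  rw [fareyMk_def _ _ h' (vec_ne_zero h'), fareyMk_def _ _ h (vec_ne_zero h),
    Projectivization.mk_eq_mk_iff']
  refine ⟨(k : ℚ), ?_⟩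
  funext i
  fin_cases i <;> simp [Matrix.smul_cons] <;> push_cast <;> ring

lemma fareyMk_neg (a b : ℤ) (h : ¬(a = 0 ∧ b = 0)) :
    fareyMk (-a) (-b) = fareyMk a b := by
  simpa using fareyMk_smul (-1) (by norm_num) h
lemma fareyMk_inj {a b c d : ℤ} (hab : Int.gcd a b = 1) (hcd : Int.gcd c d = 1)
    (h : fareyMk a b = fareyMk c d) : (a = c ∧ b = d) ∨ (a = -c ∧ b = -d) := by
  have h1 := gcd_ne_zero hab
  have h2 := gcd_ne_zero hcd
  rw [fareyMk_def _ _ h1 (vec_ne_zero h1), fareyMk_def _ _ h2 (vec_ne_zero h2),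
    Projectivization.mk_eq_mk_iff'] at h
  obtain ⟨k, hk⟩ := h
  have ha : (a : ℚ) = k * c := by simpa using (congrFun hk 0).symm
  have hb : (b : ℚ) = k * d := by simpa using (congrFun hk 1).symm
  have hden : ((k.den : ℤ) : ℚ) ≠ 0 := by exact_mod_cast (Nat.cast_ne_zero.2 k.pos.ne')
  have hkd : k * ((k.den : ℤ) : ℚ) = ((k.num : ℤ) : ℚ) := by
    simpa using Rat.mul_den_eq_num k
  have haz : a * (k.den : ℤ) = k.num * c := by
    have : (a : ℚ) * ((k.den : ℤ) : ℚ) = ((k.num : ℤ) : ℚ) * c := by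
      rw [ha, mul_right_comm, hkd]
    exact_mod_cast this
  have hbz : b * (k.den : ℤ) = k.num * d := by
    have : (b : ℚ) * ((k.den : ℤ) : ℚ) = ((k.num : ℤ) : ℚ) * d := by
      rw [hb, mul_right_comm, hkd]
    exact_mod_cast this
  -- k.den divides c and d
  have hcop : Int.gcd (k.den : ℤ) k.num = 1 := by
    simpa [Int.gcd, Nat.coprime_comm] using k.reduced
  have hdvd_c : (k.den : ℤ) ∣ c := by
    have : (k.den : ℤ) ∣ k.num * c := ⟨a, by linarith [haz]⟩
    exact (Int.isCoprime_iff_gcd_eq_one.2 hcop).dvd_of_dvd_mul_left this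
  have hdvd_d : (k.den : ℤ) ∣ d := by
    have : (k.den : ℤ) ∣ k.num * d := ⟨b, by linarith [hbz]⟩
    exact (Int.isCoprime_iff_gcd_eq_one.2 hcop).dvd_of_dvd_mul_left this
  have hden1 : (k.den : ℤ) = 1 := by
    have h1 : (k.den : ℤ) ∣ (Int.gcd c d : ℤ) := Int.dvd_coe_gcd hdvd_c hdvd_d
    rw [hcd] at h1
    exact Int.eq_one_of_dvd_one (by positivity) h1
  rw [hden1, mul_one] at haz hbz
  -- k.num divides a and b, so k.num = ±1
  have hnum : k.num = 1 ∨ k.num = -1 := by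
    have hd : k.num ∣ (Int.gcd a b : ℤ) := Int.dvd_coe_gcd ⟨c, haz⟩ ⟨d, hbz⟩
    rw [hab] at hd
    exact Int.isUnit_iff.1 (isUnit_of_dvd_one hd)
  rcases hnum with h | h <;> rw [h] at haz hbz
  · left; constructor <;> linarith
  · right; constructor <;> linarith

/-- Every point of `ℙ¹(ℚ)` has a primitive integer representative. -/
lemma exists_primitive_rep (x : P1Q) : ∃ a b : ℤ, Int.gcd a b = 1 ∧ x = fareyMk a b := by
  induction x using Projectivization.ind with
  | h v hv =>
  have hvne : v 0 ≠ 0 ∨ v 1 ≠ 0 := by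
    by_contra hc
    push_neg at hc
    exact hv (funext fun i => by fin_cases i <;> simp [hc.1, hc.2])
  set a0 : ℤ := (v 0).num * (v 1).den with ha0
  set b0 : ℤ := (v 1).num * (v 0).den with hb0
  have hN : ((v 0).den : ℚ) * ((v 1).den : ℚ) ≠ 0 := by positivity
  have h0 : ¬(a0 = 0 ∧ b0 = 0) := by
    rintro ⟨h1, h2⟩
    rcases hvne with h | h
    · exact h (by
        have := mul_eq_zero.1 h1
        rcases this with h' | h'
        · exact Rat.num_eq_zero.1 h' ▸ (Rat.num_eq_zero.1 h')
        · exact absurd h' (by exact_mod_cast (v 1).pos.ne'))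
    · exact h (by
        have := mul_eq_zero.1 h2
        rcases this with h' | h'
        · exact Rat.num_eq_zero.1 h'
        · exact absurd h' (by exact_mod_cast (v 0).pos.ne'))
  set g : ℤ := (Int.gcd a0 b0 : ℤ) with hg
  have hgn : 0 < Int.gcd a0 b0 := Nat.pos_of_ne_zero (fun hc => h0 (Int.gcd_eq_zero_iff.1 hc))
  have hgpos : 0 < g := by rw [hg]; exact_mod_cast hgn
  obtain ⟨a, ha⟩ : g ∣ a0 := Int.gcd_dvd_left _ _
  obtain ⟨b, hb⟩ : g ∣ b0 := Int.gcd_dvd_right _ _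
  have hda : a0 / g = a := by rw [ha]; exact Int.mul_ediv_cancel_left _ hgpos.ne'
  have hdb : b0 / g = b := by rw [hb]; exact Int.mul_ediv_cancel_left _ hgpos.ne'
  have hgcd : Int.gcd a b = 1 := by
    have h2 := Int.gcd_div_gcd_div_gcd (i := a0) (j := b0) hgn
    rw [← hg] at h2
    rwa [hda, hdb] at h2
  refine ⟨a, b, hgcd, ?_⟩
  have hab := gcd_ne_zero hgcd
  rw [fareyMk_def _ _ hab (vec_ne_zero hab), Projectivization.mk_eq_mk_iff']
  refine ⟨(g : ℚ) / ((v 0).den * (v 1).den : ℚ), ?_⟩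
  have key0 : (a0 : ℚ) = v 0 * (((v 0).den : ℚ) * ((v 1).den : ℚ)) := by
    rw [ha0]; push_cast; rw [← mul_assoc, Rat.mul_den_eq_num]
  have key1 : (b0 : ℚ) = v 1 * (((v 0).den : ℚ) * ((v 1).den : ℚ)) := by
    rw [hb0]; push_cast
    rw [mul_comm ((v 0).den : ℚ) ((v 1).den : ℚ), ← mul_assoc, Rat.mul_den_eq_num]
  funext i
  fin_cases i
  · show (g : ℚ) / (((v 0).den : ℚ) * ((v 1).den : ℚ)) * (a : ℚ) = v 0
    rw [div_mul_eq_mul_div, div_eq_iff hN]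
    have : ((g * a : ℤ) : ℚ) = v 0 * (((v 0).den : ℚ) * ((v 1).den : ℚ)) := by
      rw [← ha]; exact key0
    push_cast at this ⊢
    linarith
  · show (g : ℚ) / (((v 0).den : ℚ) * ((v 1).den : ℚ)) * (b : ℚ) = v 1
    rw [div_mul_eq_mul_div, div_eq_iff hN]
    have : ((g * b : ℤ) : ℚ) = v 1 * (((v 0).den : ℚ) * ((v 1).den : ℚ)) := by
      rw [← hb]; exact key1
    push_cast at this ⊢
    linarith
lemma abs_det_congr {a b c d a' b' c' d' : ℤ}
    (h1 : (a = a' ∧ b = b') ∨ (a = -a' ∧ b = -b'))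
    (h2 : (c = c' ∧ d = d') ∨ (c = -c' ∧ d = -d')) :
    |a * d - b * c| = |a' * d' - b' * c'| := by
  have : a * d - b * c = a' * d' - b' * c' ∨ a * d - b * c = -(a' * d' - b' * c') := by
    rcases h1 with ⟨rfl, rfl⟩ | ⟨rfl, rfl⟩ <;> rcases h2 with ⟨rfl, rfl⟩ | ⟨rfl, rfl⟩
    · left; ring
    · right; ring
    · right; ring
    · left; ring
  rcases this with h | h
  · rw [h]
  · rw [h, abs_neg]

/-- Adjacency from coordinates. -/
lemma adj_of_coords {a b c d : ℤ} (hab : Int.gcd a b = 1) (hcd : Int.gcd c d = 1)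
    (hdet : |a * d - b * c| = 1) : fareyGraph.Adj (fareyMk a b) (fareyMk c d) := by
  rw [fareyGraph, SimpleGraph.fromRel_adj]
  constructor
  · intro heq
    rcases fareyMk_inj hab hcd heq with ⟨h1, h2⟩ | ⟨h1, h2⟩ <;> rw [h1, h2] at hdet
    · rw [show c * d - d * c = 0 from by ring] at hdet; simp at hdet
    · rw [show -c * d - -d * c = 0 from by ring] at hdet; simp at hdet
  · exact Or.inl ⟨a, b, c, d, hab, hcd, hdet, rfl, rfl⟩

/-- Coordinates from adjacency: any primitive representatives have determinant `±1`. -/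
lemma coords_of_adj {a b c d : ℤ} (hab : Int.gcd a b = 1) (hcd : Int.gcd c d = 1)
    (h : fareyGraph.Adj (fareyMk a b) (fareyMk c d)) : |a * d - b * c| = 1 := by
  rw [fareyGraph, SimpleGraph.fromRel_adj] at h
  rcases h.2 with ⟨a', b', c', d', hab', hcd', hdet', hx, hy⟩ |
      ⟨a', b', c', d', hab', hcd', hdet', hx, hy⟩
  · rw [abs_det_congr (fareyMk_inj hab hab' hx) (fareyMk_inj hcd hcd' hy)]
    exact hdet'
  · rw [abs_det_congr (fareyMk_inj hab hcd' hy) (fareyMk_inj hcd hab' hx),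
      show c' * b' - d' * a' = -(a' * d' - b' * c') from by ring, abs_neg]
    exact hdet'

/-- Adjacency gives some primitive representatives. -/
lemma exists_coords_of_adj {x y : P1Q} (h : fareyGraph.Adj x y) :
    ∃ a b c d : ℤ, Int.gcd a b = 1 ∧ Int.gcd c d = 1 ∧ |a * d - b * c| = 1 ∧
      x = fareyMk a b ∧ y = fareyMk c d := by
  obtain ⟨a, b, hab, rfl⟩ := exists_primitive_rep x
  obtain ⟨c, d, hcd, rfl⟩ := exists_primitive_rep y
  exact ⟨a, b, c, d, hab, hcd, coords_of_adj hab hcd h, rfl, rfl⟩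
lemma sum_ne_zero {a b c d : ℤ} (hdet : |a * d - b * c| = 1) : ¬(a + c = 0 ∧ b + d = 0) := by
  rintro ⟨h1, h2⟩
  have ha : a = -c := by omega
  have hb : b = -d := by omega
  rw [ha, hb, show -c * d - -d * c = 0 from by ring] at hdet
  simp at hdet

lemma diff_ne_zero {a b c d : ℤ} (hdet : |a * d - b * c| = 1) : ¬(a - c = 0 ∧ b - d = 0) := by
  rintro ⟨h1, h2⟩
  have ha : a = c := by omega
  have hb : b = d := by omega
  rw [ha, hb, show c * d - d * c = 0 from by ring] at hdet
  simp at hdet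

lemma gcd_sum {a b c d : ℤ} (hdet : |a * d - b * c| = 1) : Int.gcd (a + c) (b + d) = 1 := by
  have h1 : (Int.gcd (a + c) (b + d) : ℤ) ∣ a * d - b * c := by
    have := dvd_sub
      (Dvd.dvd.mul_right (Int.gcd_dvd_left _ _ : (Int.gcd (a + c) (b + d) : ℤ) ∣ a + c) d)
      (Dvd.dvd.mul_right (Int.gcd_dvd_right _ _ : (Int.gcd (a + c) (b + d) : ℤ) ∣ b + d) c)
    rwa [show (a + c) * d - (b + d) * c = a * d - b * c from by ring] at this
  rcases abs_eq (by norm_num : (0:ℤ) ≤ 1) |>.1 hdet with h | h <;> rw [h] at h1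
  · exact_mod_cast Int.eq_one_of_dvd_one (by positivity) h1
  · have := (dvd_neg.2 h1)
    simp only [neg_neg] at this
    exact_mod_cast Int.eq_one_of_dvd_one (by positivity) this

lemma gcd_diff {a b c d : ℤ} (hdet : |a * d - b * c| = 1) : Int.gcd (a - c) (b - d) = 1 := by
  have h : |a * d - b * (-(-c))| = 1 := by simpa using hdet
  have := gcd_sum (a := a) (b := b) (c := -c) (d := -d)
    (by rw [show a * -d - b * -c = -(a * d - b * c) from by ring, abs_neg]; exact hdet)
  simpa [sub_eq_add_neg] using this

/-- The two ways of completing an edge to a triangle. -/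
lemma completion {a b c d p q : ℤ} (hab : Int.gcd a b = 1) (hcd : Int.gcd c d = 1)
    (hpq : Int.gcd p q = 1) (hdet : |a * d - b * c| = 1)
    (h1 : |a * q - b * p| = 1) (h2 : |c * q - d * p| = 1) :
    fareyMk p q = fareyMk (a + c) (b + d) ∨ fareyMk p q = fareyMk (a - c) (b - d) := by
  rcases (abs_eq (by norm_num : (0:ℤ) ≤ 1)).1 hdet with hε | hε
  case _ =>
    have hm : |d * p - c * q| = 1 := by
      rw [show d * p - c * q = -(c * q - d * p) from by ring, abs_neg]; exact h2
    rcases (abs_eq (by norm_num : (0:ℤ) ≤ 1)).1 hm with hm' | hm' <;>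
      rcases (abs_eq (by norm_num : (0:ℤ) ≤ 1)).1 h1 with hn' | hn'
    · have hp : p = a + c := by linear_combination a * hm' + c * hn' - p * hε
      have hq : q = b + d := by linear_combination b * hm' + d * hn' - q * hε
      left; rw [hp, hq]
    · have hp : p = a - c := by linear_combination a * hm' + c * hn' - p * hε
      have hq : q = b - d := by linear_combination b * hm' + d * hn' - q * hε
      right; rw [hp, hq]
    · have hp : p = -(a - c) := by linear_combination a * hm' + c * hn' - p * hε
      have hq : q = -(b - d) := by linear_combination b * hm' + d * hn' - q * hε
      right; rw [hp, hq, fareyMk_neg _ _ (diff_ne_zero hdet)]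
    · have hp : p = -(a + c) := by linear_combination a * hm' + c * hn' - p * hε
      have hq : q = -(b + d) := by linear_combination b * hm' + d * hn' - q * hε
      left; rw [hp, hq, fareyMk_neg _ _ (sum_ne_zero hdet)]
  case _ =>
    have hm : |d * p - c * q| = 1 := by
      rw [show d * p - c * q = -(c * q - d * p) from by ring, abs_neg]; exact h2
    rcases (abs_eq (by norm_num : (0:ℤ) ≤ 1)).1 hm with hm' | hm' <;>
      rcases (abs_eq (by norm_num : (0:ℤ) ≤ 1)).1 h1 with hn' | hn'
    · have hp : p = -(a + c) := by linear_combination -a * hm' - c * hn' + p * hε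
      have hq : q = -(b + d) := by linear_combination -b * hm' - d * hn' + q * hε
      left; rw [hp, hq, fareyMk_neg _ _ (sum_ne_zero hdet)]
    · have hp : p = -(a - c) := by linear_combination -a * hm' - c * hn' + p * hε
      have hq : q = -(b - d) := by linear_combination -b * hm' - d * hn' + q * hε
      right; rw [hp, hq, fareyMk_neg _ _ (diff_ne_zero hdet)]
    · have hp : p = a - c := by linear_combination -a * hm' - c * hn' + p * hε
      have hq : q = b - d := by linear_combination -b * hm' - d * hn' + q * hε
      right; rw [hp, hq]
    · have hp : p = a + c := by linear_combination -a * hm' - c * hn' + p * hε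
      have hq : q = b + d := by linear_combination -b * hm' - d * hn' + q * hε
      left; rw [hp, hq]

/-- The two completions of an edge are distinct. -/
lemma completion_ne {a b c d : ℤ} (hab : Int.gcd a b = 1) (hcd : Int.gcd c d = 1)
    (hdet : |a * d - b * c| = 1) :
    fareyMk (a + c) (b + d) ≠ fareyMk (a - c) (b - d) := by
  intro h
  rcases fareyMk_inj (gcd_sum hdet) (gcd_diff hdet) h with ⟨h1, h2⟩ | ⟨h1, h2⟩
  · have hc : c = 0 := by omega
    have hd : d = 0 := by omega
    rw [hc, hd] at hcd; simp at hcd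
  · have ha : a = 0 := by omega
    have hb : b = 0 := by omega
    rw [ha, hb] at hab; simp at hab
/-- An element of `GL(2,ℤ)` with columns `(a,b)` and `(c,d)`. -/
def mkGL (a b c d : ℤ) (h : a * d - b * c = 1 ∨ a * d - b * c = -1) : GL (Fin 2) ℤ :=
  ⟨!![a, c; b, d],
    !![(a * d - b * c) * d, -((a * d - b * c) * c); -((a * d - b * c) * b), (a * d - b * c) * a],
    by
      have hε2 : (a * d - b * c) * (a * d - b * c) = 1 := by
        rcases h with h | h <;> rw [h] <;> ring
      ext i j
      fin_cases i <;> fin_cases j <;>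
        simp [Matrix.mul_apply, Fin.sum_univ_two, Matrix.one_apply] <;>
        first | linear_combination hε2 | linear_combination -hε2 | ring,
    by
      have hε2 : (a * d - b * c) * (a * d - b * c) = 1 := by
        rcases h with h | h <;> rw [h] <;> ring
      ext i j
      fin_cases i <;> fin_cases j <;>
        simp [Matrix.mul_apply, Fin.sum_univ_two, Matrix.one_apply] <;>
        first | linear_combination hε2 | linear_combination -hε2 | ring⟩

lemma mkGL_coe (a b c d : ℤ) (h : a * d - b * c = 1 ∨ a * d - b * c = -1) :
    ((mkGL a b c d h : GL (Fin 2) ℤ) : Matrix (Fin 2) (Fin 2) ℤ) = !![a, c; b, d] := rfl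

/-- Computation of the action in integer coordinates. -/
lemma fareyAct_fareyMk (g : GL (Fin 2) ℤ) {p q : ℤ} (h : ¬(p = 0 ∧ q = 0)) :
    fareyAct g (fareyMk p q) =
      fareyMk ((g : Matrix (Fin 2) (Fin 2) ℤ) 0 0 * p + (g : Matrix (Fin 2) (Fin 2) ℤ) 0 1 * q)
        ((g : Matrix (Fin 2) (Fin 2) ℤ) 1 0 * p + (g : Matrix (Fin 2) (Fin 2) ℤ) 1 1 * q) := by
  set M := (g : Matrix (Fin 2) (Fin 2) ℤ) with hM
  have hvec : (matQ g).mulVecLin ![(p:ℚ), q] =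
      ![((M 0 0 * p + M 0 1 * q : ℤ) : ℚ), ((M 1 0 * p + M 1 1 * q : ℤ) : ℚ)] := by
    funext i
    fin_cases i <;>
      simp [matQ, Matrix.mulVecLin_apply, Matrix.mulVec, dotProduct,
        Fin.sum_univ_two, hM] <;> push_cast <;> ring
  have h' : ¬(M 0 0 * p + M 0 1 * q = 0 ∧ M 1 0 * p + M 1 1 * q = 0) := by
    rintro ⟨e0, e1⟩
    have hz : (matQ g).mulVecLin ![(p:ℚ), q] = 0 := by
      rw [hvec]; funext i; fin_cases i <;> simp [e0, e1]
    have := mulVecLin_matQ_injective g (a₁ := ![(p:ℚ), q]) (a₂ := 0) (by rw [hz, map_zero])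
    exact vec_ne_zero h this
  rw [fareyMk_def p q h (vec_ne_zero h), fareyMk_def _ _ h' (vec_ne_zero h'),
    fareyAct, Projectivization.map_mk, Projectivization.mk_eq_mk_iff']
  exact ⟨1, by rw [one_smul, hvec]⟩

lemma fareyAct_comp (g h : GL (Fin 2) ℤ) (x : P1Q) :
    fareyAct (g * h) x = fareyAct g (fareyAct h x) := by
  induction x using Projectivization.ind with
  | h v hv =>
  rw [fareyAct, fareyAct, fareyAct, Projectivization.map_mk, Projectivization.map_mk,
    Projectivization.map_mk, Projectivization.mk_eq_mk_iff']
  refine ⟨1, ?_⟩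
  rw [one_smul]
  simp [matQ_mul, Matrix.mulVecLin_apply, Matrix.mulVec_mulVec]

lemma fareyAct_injective (g : GL (Fin 2) ℤ) : Function.Injective (fareyAct g) :=
  Projectivization.map_injective _ (mulVecLin_matQ_injective g)

/-- The action preserves primitivity. -/
lemma gcd_act (g : GL (Fin 2) ℤ) {p q : ℤ} (h : Int.gcd p q = 1) :
    Int.gcd ((g : Matrix (Fin 2) (Fin 2) ℤ) 0 0 * p + (g : Matrix (Fin 2) (Fin 2) ℤ) 0 1 * q)
      ((g : Matrix (Fin 2) (Fin 2) ℤ) 1 0 * p + (g : Matrix (Fin 2) (Fin 2) ℤ) 1 1 * q) = 1 := by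
  set M := (g : Matrix (Fin 2) (Fin 2) ℤ) with hM
  set N := ((g⁻¹ : GL (Fin 2) ℤ) : Matrix (Fin 2) (Fin 2) ℤ) with hN
  have e : N * M = 1 := by
    rw [hN, hM, ← Units.val_mul, inv_mul_cancel, Units.val_one]
  have e00 := congrFun (congrFun e 0) 0
  have e01 := congrFun (congrFun e 0) 1
  have e10 := congrFun (congrFun e 1) 0
  have e11 := congrFun (congrFun e 1) 1
  simp [Matrix.mul_apply, Fin.sum_univ_two, Matrix.one_apply] at e00 e01 e10 e11
  set u0 := M 0 0 * p + M 0 1 * q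
  set u1 := M 1 0 * p + M 1 1 * q
  have hp : p = N 0 0 * u0 + N 0 1 * u1 := by
    simp only [u0, u1]; linear_combination -p * e00 - q * e01
  have hq : q = N 1 0 * u0 + N 1 1 * u1 := by
    simp only [u0, u1]; linear_combination -p * e10 - q * e11
  have hd : (Int.gcd u0 u1 : ℤ) ∣ (Int.gcd p q : ℤ) := by
    refine Int.dvd_coe_gcd ?_ ?_
    · rw [hp]
      exact dvd_add (Dvd.dvd.mul_left (Int.gcd_dvd_left _ _) _) (Dvd.dvd.mul_left (Int.gcd_dvd_right _ _) _)
    · rw [hq]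
      exact dvd_add (Dvd.dvd.mul_left (Int.gcd_dvd_left _ _) _) (Dvd.dvd.mul_left (Int.gcd_dvd_right _ _) _)
  rw [h] at hd
  exact_mod_cast Int.eq_one_of_dvd_one (by positivity) hd

/-- The action preserves adjacency. -/
lemma fareyAct_adj (g : GL (Fin 2) ℤ) {x y : P1Q} (h : fareyGraph.Adj x y) :
    fareyGraph.Adj (fareyAct g x) (fareyAct g y) := by
  obtain ⟨a, b, c, d, hab, hcd, hdet, rfl, rfl⟩ := exists_coords_of_adj h
  set M := (g : Matrix (Fin 2) (Fin 2) ℤ) with hM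
  rw [fareyAct_fareyMk g (gcd_ne_zero hab), fareyAct_fareyMk g (gcd_ne_zero hcd)]
  have hun : IsUnit (M.det) := (Matrix.isUnit_iff_isUnit_det _).1 g.isUnit
  have hdetM : M.det = 1 ∨ M.det = -1 := Int.isUnit_iff.1 hun
  have hdet2 : M.det = M 0 0 * M 1 1 - M 0 1 * M 1 0 := Matrix.det_fin_two M
  refine adj_of_coords (gcd_act g hab) (gcd_act g hcd) ?_
  have key : (M 0 0 * a + M 0 1 * b) * (M 1 0 * c + M 1 1 * d) -
      (M 1 0 * a + M 1 1 * b) * (M 0 0 * c + M 0 1 * d) = M.det * (a * d - b * c) := by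
    rw [hdet2]; ring
  rw [key]
  rcases hdetM with h1 | h1 <;> rw [h1]
  · simpa using hdet
  · rw [neg_one_mul, abs_neg]; exact hdet
lemma fareyAct_one (x : P1Q) : fareyAct 1 x = x := by
  induction x using Projectivization.ind with
  | h v hv =>
  rw [fareyAct, Projectivization.map_mk, Projectivization.mk_eq_mk_iff']
  exact ⟨1, by rw [one_smul]; simp [matQ_one]⟩

lemma gcd_10 : Int.gcd 1 0 = 1 := by norm_num
lemma gcd_01 : Int.gcd 0 1 = 1 := by norm_num
lemma gcd_11 : Int.gcd 1 1 = 1 := by norm_num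

/-- Coordinates for an ordered triangle. -/
lemma triangle_coords {x y z : P1Q} (hxy : fareyGraph.Adj x y) (hxz : fareyGraph.Adj x z)
    (hyz : fareyGraph.Adj y z) :
    ∃ a b c d : ℤ, Int.gcd a b = 1 ∧ Int.gcd c d = 1 ∧ |a * d - b * c| = 1 ∧
      x = fareyMk a b ∧ y = fareyMk c d ∧ z = fareyMk (a + c) (b + d) := by
  obtain ⟨a, b, c, d, hab, hcd, hdet, rfl, rfl⟩ := exists_coords_of_adj hxy
  obtain ⟨p, q, hpq, rfl⟩ := exists_primitive_rep z
  have h1 := coords_of_adj hab hpq hxz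
  have h2 := coords_of_adj hcd hpq hyz
  rcases completion hab hcd hpq hdet h1 h2 with h | h
  · exact ⟨a, b, c, d, hab, hcd, hdet, rfl, rfl, h⟩
  · refine ⟨a, b, -c, -d, hab, by simpa using hcd, ?_, rfl, (fareyMk_neg c d (gcd_ne_zero hcd)).symm, ?_⟩
    · rw [show a * -d - b * -c = -(a * d - b * c) from by ring, abs_neg]; exact hdet
    · rw [show a + -c = a - c from by ring, show b + -d = b - d from by ring]; exact h

/-- Any ordered triangle is the image of the standard one under `GL(2,ℤ)`. -/
lemma exists_gl_of_triple {x y z : P1Q} (hxy : fareyGraph.Adj x y) (hxz : fareyGraph.Adj x z)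
    (hyz : fareyGraph.Adj y z) :
    ∃ g : GL (Fin 2) ℤ, fareyAct g (fareyMk 1 0) = x ∧ fareyAct g (fareyMk 0 1) = y ∧
      fareyAct g (fareyMk 1 1) = z := by
  obtain ⟨a, b, c, d, hab, hcd, hdet, rfl, rfl, rfl⟩ := triangle_coords hxy hxz hyz
  have hdet' : a * d - b * c = 1 ∨ a * d - b * c = -1 :=
    (abs_eq (by norm_num : (0:ℤ) ≤ 1)).1 hdet
  refine ⟨mkGL a b c d hdet', ?_, ?_, ?_⟩
  · rw [fareyAct_fareyMk _ (by norm_num), mkGL_coe]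
    norm_num
  · rw [fareyAct_fareyMk _ (by norm_num), mkGL_coe]
    norm_num
  · rw [fareyAct_fareyMk _ (by norm_num), mkGL_coe]
    norm_num

/-- Base case: `φ` agrees with some `g` on a given triangle. -/
lemma base_triangle {Y : Set P1Q} {φ : P1Q → P1Q}
    (hs : FareySimplicial Y φ) (hli : FareyLocallyInjective Y φ)
    {x y z : P1Q} (hx : x ∈ Y) (hy : y ∈ Y) (hz : z ∈ Y)
    (hxy : fareyGraph.Adj x y) (hxz : fareyGraph.Adj x z) (hyz : fareyGraph.Adj y z) :
    ∃ g : GL (Fin 2) ℤ, φ x = fareyAct g x ∧ φ y = fareyAct g y ∧ φ z = fareyAct g z := by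
  obtain ⟨g₀, hg₀x, hg₀y, hg₀z⟩ := exists_gl_of_triple hxy hxz hyz
  obtain ⟨g₁, hg₁x, hg₁y, hg₁z⟩ := exists_gl_of_triple (hs x hx y hy hxy) (hs x hx z hz hxz)
    (hs y hy z hz hyz)
  have kx : fareyAct g₀⁻¹ x = fareyMk 1 0 := by
    rw [← hg₀x, ← fareyAct_comp, inv_mul_cancel, fareyAct_one]
  have ky : fareyAct g₀⁻¹ y = fareyMk 0 1 := by
    rw [← hg₀y, ← fareyAct_comp, inv_mul_cancel, fareyAct_one]
  have kz : fareyAct g₀⁻¹ z = fareyMk 1 1 := by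
    rw [← hg₀z, ← fareyAct_comp, inv_mul_cancel, fareyAct_one]
  refine ⟨g₁ * g₀⁻¹, ?_, ?_, ?_⟩
  · rw [fareyAct_comp, kx, hg₁x]
  · rw [fareyAct_comp, ky, hg₁y]
  · rw [fareyAct_comp, kz, hg₁z]

/-- Any common neighbour of two adjacent points is one of the two completions. -/
lemma completion_point {a b c d : ℤ} (hab : Int.gcd a b = 1) (hcd : Int.gcd c d = 1)
    (hdet : |a * d - b * c| = 1) {r : P1Q}
    (h1 : fareyGraph.Adj (fareyMk a b) r) (h2 : fareyGraph.Adj (fareyMk c d) r) :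
    r = fareyMk (a + c) (b + d) ∨ r = fareyMk (a - c) (b - d) := by
  obtain ⟨p, q, hpq, rfl⟩ := exists_primitive_rep r
  exact completion hab hcd hpq hdet (coords_of_adj hab hpq h1) (coords_of_adj hcd hpq h2)

/-- Propagation across an edge. -/
lemma propagate {Y : Set P1Q} {φ : P1Q → P1Q}
    (hs : FareySimplicial Y φ) (hli : FareyLocallyInjective Y φ) (g : GL (Fin 2) ℤ)
    {u v w p : P1Q} (hu : u ∈ Y) (hv : v ∈ Y) (hw : w ∈ Y) (hp : p ∈ Y)
    (huv : fareyGraph.Adj u v) (hwu : fareyGraph.Adj u w) (hwv : fareyGraph.Adj v w)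
    (hpu : fareyGraph.Adj u p) (hpv : fareyGraph.Adj v p) (hpw : p ≠ w)
    (hgu : φ u = fareyAct g u) (hgv : φ v = fareyAct g v) (hgw : φ w = fareyAct g w) :
    φ p = fareyAct g p := by
  obtain ⟨a, b, c, d, hab, hcd, hdet, hφu, hφv⟩ := exists_coords_of_adj (hs u hu v hv huv)
  -- φ w, φ p and (fareyAct g) p are completions of the edge (φ u, φ v)
  have hφw : φ w = fareyMk (a + c) (b + d) ∨ φ w = fareyMk (a - c) (b - d) :=
    completion_point hab hcd hdet (hφu ▸ hs u hu w hw hwu) (hφv ▸ hs v hv w hw hwv)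
  have hφp : φ p = fareyMk (a + c) (b + d) ∨ φ p = fareyMk (a - c) (b - d) :=
    completion_point hab hcd hdet (hφu ▸ hs u hu p hp hpu) (hφv ▸ hs v hv p hp hpv)
  have hψp : fareyAct g p = fareyMk (a + c) (b + d) ∨
      fareyAct g p = fareyMk (a - c) (b - d) :=
    completion_point hab hcd hdet (hφu ▸ hgu ▸ fareyAct_adj g hpu) (hφv ▸ hgv ▸ fareyAct_adj g hpv)
  have hne1 : φ p ≠ φ w := by
    intro h
    exact hpw (hli u hu ⟨hp, Or.inr hpu⟩ ⟨hw, Or.inr hwu⟩ h)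
  have hne2 : fareyAct g p ≠ φ w := by
    rw [hgw]
    intro h
    exact hpw (fareyAct_injective g h)
  rcases hφw with hw1 | hw1 <;> rcases hφp with hp1 | hp1 <;> rcases hψp with hp2 | hp2 <;>
    first
      | (exact absurd (hp1.trans hw1.symm) hne1)
      | (exact absurd (hp2.trans hw1.symm) hne2)
      | (rw [hp1, hp2])

/-- Propagation from one triangle to an adjacent one. -/
lemma propagate_triangle {Y : Set P1Q} {φ : P1Q → P1Q}
    (hs : FareySimplicial Y φ) (hli : FareyLocallyInjective Y φ) (g : GL (Fin 2) ℤ)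
    (t t' : {t : Set P1Q // IsFareyTriangle t})
    (hts : (t : Set P1Q) ⊆ Y) (ht's : (t' : Set P1Q) ⊆ Y)
    (hadj : fareyDual.Adj t t')
    (hagree : ∀ v ∈ (t : Set P1Q), φ v = fareyAct g v) :
    ∀ v ∈ (t' : Set P1Q), φ v = fareyAct g v := by
  rw [fareyDual, SimpleGraph.fromRel_adj] at hadj
  have hcard : ((t : Set P1Q) ∩ (t' : Set P1Q)).ncard = 2 := by
    rcases hadj.2 with h | h
    · exact h
    · rwa [Set.inter_comm] at h
  obtain ⟨u, v, huv, huvset⟩ := Set.ncard_eq_two.1 hcard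
  have humem : u ∈ (t : Set P1Q) ∩ (t' : Set P1Q) := by
    rw [huvset]; exact Set.mem_insert u {v}
  have hvmem : v ∈ (t : Set P1Q) ∩ (t' : Set P1Q) := by
    rw [huvset]; exact Set.mem_insert_of_mem u rfl
  have hu_t : u ∈ (t : Set P1Q) := humem.1
  have hv_t : v ∈ (t : Set P1Q) := hvmem.1
  have hu_t' : u ∈ (t' : Set P1Q) := humem.2
  have hv_t' : v ∈ (t' : Set P1Q) := hvmem.2
  -- a third vertex w of t
  have hnsub : ¬ (t : Set P1Q) ⊆ {u, v} := by
    intro hsub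
    have := Set.ncard_le_ncard hsub ((Set.finite_singleton v).insert u)
    rw [t.2.1, Set.ncard_pair huv] at this
    omega
  obtain ⟨w, hw_t, hw_uv⟩ := Set.not_subset.1 hnsub
  have hwu : w ≠ u := fun h => hw_uv (by rw [h]; exact Set.mem_insert u {v})
  have hwv : w ≠ v := fun h => hw_uv (by rw [h]; exact Set.mem_insert_of_mem u rfl)
  intro p hp_t'
  by_cases hp_t : p ∈ (t : Set P1Q)
  · exact hagree p hp_t
  have hp_uv : p ∉ ({u, v} : Set P1Q) := by
    intro h
    rw [← huvset] at h
    exact hp_t h.1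
  have hpu : p ≠ u := fun h => hp_uv (by rw [h]; exact Set.mem_insert u {v})
  have hpv : p ≠ v := fun h => hp_uv (by rw [h]; exact Set.mem_insert_of_mem u rfl)
  have hpw : p ≠ w := fun h => hp_t (h ▸ hw_t)
  exact propagate hs hli g (hts hu_t) (hts hv_t) (hts hw_t) (ht's hp_t')
    (t.2.2 u hu_t v hv_t huv)
    (t.2.2 u hu_t w hw_t (Ne.symm hwu))
    (t.2.2 v hv_t w hw_t (Ne.symm hwv))
    (t'.2.2 u hu_t' p hp_t' (Ne.symm hpu))
    (t'.2.2 v hv_t' p hp_t' (Ne.symm hpv))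
    hpw
    (hagree u hu_t) (hagree v hv_t) (hagree w hw_t)

/-- if `D` is a finite nonempty set of Farey triangles inducing a connected
subgraph of the dual graph, then the union of the triangles in `D` is a rigid subset of
`ℙ¹(ℚ)`: every locally injective simplicial map from it to `ℙ¹(ℚ)` is induced by an
element of `GL(2,ℤ)`. -/
theorem farey_disk_rigid (D : Set {t : Set P1Q // IsFareyTriangle t})
    (hDfin : D.Finite) (hDne : D.Nonempty)
    (hDconn : (fareyDual.induce D).Connected) :
    ∀ φ : P1Q → P1Q,
      FareySimplicial (⋃ t ∈ D, (t : Set P1Q)) φ →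
      FareyLocallyInjective (⋃ t ∈ D, (t : Set P1Q)) φ →
      ∃ g : GL (Fin 2) ℤ, ∀ y ∈ ⋃ t ∈ D, (t : Set P1Q), φ y = fareyAct g y := by
  intro φ hs hli
  set Y := ⋃ t ∈ D, (t : Set P1Q) with hY
  have hsubY : ∀ t ∈ D, (t : Set P1Q) ⊆ Y := by
    intro t ht p hp
    exact Set.mem_biUnion ht hp
  obtain ⟨t₀, ht₀⟩ := hDne
  obtain ⟨x, y, z, hxy, hxz, hyz, hteq⟩ := Set.ncard_eq_three.1 t₀.2.1
  have hx : x ∈ (t₀ : Set P1Q) := by rw [hteq]; exact Set.mem_insert x {y, z}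
  have hy' : y ∈ (t₀ : Set P1Q) := by rw [hteq]; exact Set.mem_insert_of_mem x (Set.mem_insert y {z})
  have hz : z ∈ (t₀ : Set P1Q) := by
    rw [hteq]; exact Set.mem_insert_of_mem x (Set.mem_insert_of_mem y rfl)
  obtain ⟨g, hgx, hgy, hgz⟩ := base_triangle hs hli (hsubY t₀ ht₀ hx) (hsubY t₀ ht₀ hy')
    (hsubY t₀ ht₀ hz) (t₀.2.2 x hx y hy' hxy) (t₀.2.2 x hx z hz hxz) (t₀.2.2 y hy' z hz hyz)
  have hbase : ∀ v ∈ (t₀ : Set P1Q), φ v = fareyAct g v := by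
    intro v hv
    rw [hteq] at hv
    rcases hv with rfl | rfl | rfl
    exacts [hgx, hgy, hgz]
  refine ⟨g, ?_⟩
  -- propagate along walks in the induced dual graph
  have key : ∀ (A B : D), ∀ _w : (fareyDual.induce D).Walk A B,
      (∀ v ∈ ((A : {t : Set P1Q // IsFareyTriangle t}) : Set P1Q), φ v = fareyAct g v) →
      (∀ v ∈ ((B : {t : Set P1Q // IsFareyTriangle t}) : Set P1Q), φ v = fareyAct g v) := by
    intro A B w
    induction w with
    | nil => exact fun h => h
    | @cons A C B hAC _p ih =>
      intro hA
      refine ih ?_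
      have hadj : fareyDual.Adj (A : {t : Set P1Q // IsFareyTriangle t}) C := hAC
      exact propagate_triangle hs hli g _ _ (hsubY _ A.2) (hsubY _ C.2) hadj hA
  intro p hp
  rw [hY, Set.mem_iUnion₂] at hp
  obtain ⟨t, ht, hpt⟩ := hp
  obtain ⟨wlk⟩ := hDconn.preconnected ⟨t₀, ht₀⟩ ⟨t, ht⟩
  exact key ⟨t₀, ht₀⟩ ⟨t, ht⟩ wlk hbase p hpt
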